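/- Let Λ be a strongly connected finite k-graph and suppose g ∈ ℤ^k \ Per Λ. Then there exist a ∈ ℕ^k with a ≠ 0 and, for each vertex v ∈ Λ^0, a path λ_v ∈ vΛ^a, such that for all μ, ν ∈ Λ with s(μ) = s(ν) and d(μ) − d(ν) = g, one has Λ^min(μλ_{s(μ)}, νλ_{s(μ)}) = ∅. -/

import Mathlib

/-- A higher-rank graph (`k`-graph): a countable category with a degree functor
`d : Λ → ℕ^k` satisfying the unique factorisation property.  Morphisms are called
paths; the vertices are the paths of degree `0` (the identity morphisms).
`r` and `s` are the codomain (range) and domain (source) maps.  By convention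
`Λ^{e_i} ≠ ∅` for each standard generator `e_i` of `ℕ^k`. -/
structure KGraph (k : ℕ) where
  Path : Type
  countable : Countable Path
  d : Path → Fin k → ℕ
  r : Path → Path
  s : Path → Path
  d_r : ∀ lam, d (r lam) = 0
  d_s : ∀ lam, d (s lam) = 0
  r_vertex : ∀ v, d v = 0 → r v = v
  s_vertex : ∀ v, d v = 0 → s v = v
  comp : ∀ μ ν : Path, s μ = r ν → Path
  r_comp : ∀ μ ν h, r (comp μ ν h) = r μ
  s_comp : ∀ μ ν h, s (comp μ ν h) = s ν
  d_comp : ∀ μ ν h, d (comp μ ν h) = d μ + d ν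
  id_comp : ∀ lam (h : s (r lam) = r lam), comp (r lam) lam h = lam
  comp_id : ∀ lam (h : s lam = r (s lam)), comp lam (s lam) h = lam
  assoc : ∀ μ ν τ (h1 : s μ = r ν) (h2 : s ν = r τ)
      (h3 : s (comp μ ν h1) = r τ) (h4 : s μ = r (comp ν τ h2)),
      comp (comp μ ν h1) τ h3 = comp μ (comp ν τ h2) h4
  factor : ∀ (lam : Path) (m n : Fin k → ℕ), d lam = m + n →
      ∃! μν : Path × Path, ∃ h : s μν.1 = r μν.2,
        d μν.1 = m ∧ d μν.2 = n ∧ comp μν.1 μν.2 h = lam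
  edge_nonempty : ∀ i : Fin k, ∃ lam, d lam = Pi.single i 1

namespace KGraph

variable {k : ℕ}

/-- The vertices of a `k`-graph: the paths of degree `0`. -/
abbrev Vertex (Λ : KGraph k) : Type := {v : Λ.Path // Λ.d v = 0}

/-- A `k`-graph is finite if `Λ^n` is finite for every `n ∈ ℕ^k`. -/
def IsFinite (Λ : KGraph k) : Prop := ∀ n : Fin k → ℕ, {lam : Λ.Path | Λ.d lam = n}.Finite

/-- A `k`-graph is strongly connected if `vΛw ≠ ∅` for all vertices `v, w`. -/
def StronglyConnected (Λ : KGraph k) : Prop :=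
  ∀ v w : Λ.Path, Λ.d v = 0 → Λ.d w = 0 → ∃ lam : Λ.Path, Λ.r lam = v ∧ Λ.s lam = w

/-- `Λ^min(μ,ν) = {(α,β) : μα = νβ, d(μα) = d(μ) ∨ d(ν)}`. -/
def minSet (Λ : KGraph k) (μ ν : Λ.Path) : Set (Λ.Path × Λ.Path) :=
  {p | ∃ (h1 : Λ.s μ = Λ.r p.1) (h2 : Λ.s ν = Λ.r p.2),
      Λ.comp μ p.1 h1 = Λ.comp ν p.2 h2 ∧ Λ.d μ + Λ.d p.1 = Λ.d μ ⊔ Λ.d ν}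

end KGraph

/-- An infinite path in a `k`-graph `Λ`: a degree-preserving functor `x : Ω_k → Λ`,
recorded by its values `x(m,n)` for `m ≤ n` in `ℕ^k`. -/
structure InfinitePath {k : ℕ} (Λ : KGraph k) where
  toFun : ∀ m n : Fin k → ℕ, m ≤ n → Λ.Path
  d_eq : ∀ m n h, Λ.d (toFun m n h) = n - m
  src : ∀ m n h, Λ.s (toFun m n h) = toFun n n le_rfl
  rng : ∀ m n h, Λ.r (toFun m n h) = toFun m m le_rfl
  comp_eq : ∀ m n p (h1 : m ≤ n) (h2 : n ≤ p)
      (hc : Λ.s (toFun m n h1) = Λ.r (toFun n p h2)),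
      Λ.comp (toFun m n h1) (toFun n p h2) hc = toFun m p (h1.trans h2)

namespace InfinitePath

variable {k : ℕ} {Λ : KGraph k}

/-- The shift map `σ^n` on the infinite-path space, `σ^n(x)(p,q) = x(n+p, n+q)`. -/
def shift (x : InfinitePath Λ) (n : Fin k → ℕ) : InfinitePath Λ where
  toFun p q h := x.toFun (n + p) (n + q) (add_le_add le_rfl h)
  d_eq p q h := by
    rw [x.d_eq]
    funext i
    exact Nat.add_sub_add_left (n i) (q i) (p i)
  src p q h := x.src _ _ _
  rng p q h := x.rng _ _ _
  comp_eq p q t h1 h2 hc := x.comp_eq _ _ _ _ _ hc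

/-- The range `r(x) = x(0,0)` of an infinite path. -/
def range (x : InfinitePath Λ) : Λ.Path := x.toFun 0 0 le_rfl

end InfinitePath

/-- `ExtEq Λ lam y x` says that `y = lam · x`, i.e. `y(0, d(lam)) = lam` and
`σ^{d(lam)}(y) = x`.  (Such an extension is unique when it exists.) -/
def KGraph.ExtEq {k : ℕ} (Λ : KGraph k) (lam : Λ.Path) (y x : InfinitePath Λ) : Prop :=
  y.toFun 0 (Λ.d lam) zero_le = lam ∧ y.shift (Λ.d lam) = x

/-- `Λ.IsTheta m n μ ν` says that `μ ∈ Λ^m`, `ν ∈ Λ^n`, and `μx = νx` for every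
infinite path `x ∈ Z(s(μ))`; i.e. `ν = θ_{m,n}(μ)`. -/
def KGraph.IsTheta {k : ℕ} (Λ : KGraph k) (m n : Fin k → ℕ) (μ ν : Λ.Path) : Prop :=
  Λ.d μ = m ∧ Λ.d ν = n ∧
    ∀ x : InfinitePath Λ, x.range = Λ.s μ →
      ∃ y : InfinitePath Λ, Λ.ExtEq μ y x ∧ Λ.ExtEq ν y x

/-- The periodicity group `Per Λ = {m − n : σ^m(x) = σ^n(x) for all x ∈ Λ^∞} ⊆ ℤ^k`. -/
def KGraph.Per {k : ℕ} (Λ : KGraph k) : Set (Fin k → ℤ) :=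
  {g | ∃ m n : Fin k → ℕ, (∀ i, (m i : ℤ) - n i = g i) ∧
      ∀ x : InfinitePath Λ, x.shift m = x.shift n}

/-- `Λ` is aperiodic if every vertex `v` admits `x ∈ Z(v)` with
`σ^m(x) ≠ σ^n(x)` for all `m ≠ n` in `ℕ^k`. -/
def KGraph.Aperiodic {k : ℕ} (Λ : KGraph k) : Prop :=
  ∀ v : Λ.Path, Λ.d v = 0 → ∃ x : InfinitePath Λ, x.range = v ∧
    ∀ m n : Fin k → ℕ, m ≠ n → x.shift m ≠ x.shift n

namespace KGraph

variable {k : ℕ} (Λ : KGraph k)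

/-- Total composition: `comp' μ ν = μν` when composable, junk otherwise. -/
noncomputable def comp' (μ ν : Λ.Path) : Λ.Path :=
  open Classical in
  if h : Λ.s μ = Λ.r ν then Λ.comp μ ν h else μ

variable {Λ}

theorem comp'_eq {μ ν : Λ.Path} (h : Λ.s μ = Λ.r ν) : Λ.comp' μ ν = Λ.comp μ ν h := by
  unfold comp'; exact dif_pos h

theorem d_comp' {μ ν : Λ.Path} (h : Λ.s μ = Λ.r ν) :
    Λ.d (Λ.comp' μ ν) = Λ.d μ + Λ.d ν := by rw [comp'_eq h, Λ.d_comp]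

theorem r_comp' {μ ν : Λ.Path} (h : Λ.s μ = Λ.r ν) :
    Λ.r (Λ.comp' μ ν) = Λ.r μ := by rw [comp'_eq h, Λ.r_comp]

theorem s_comp' {μ ν : Λ.Path} (h : Λ.s μ = Λ.r ν) :
    Λ.s (Λ.comp' μ ν) = Λ.s ν := by rw [comp'_eq h, Λ.s_comp]

theorem comp'_assoc {μ ν τ : Λ.Path} (h1 : Λ.s μ = Λ.r ν) (h2 : Λ.s ν = Λ.r τ) :
    Λ.comp' (Λ.comp' μ ν) τ = Λ.comp' μ (Λ.comp' ν τ) := by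
  have h3 : Λ.s (Λ.comp μ ν h1) = Λ.r τ := by rw [Λ.s_comp]; exact h2
  have h4 : Λ.s μ = Λ.r (Λ.comp ν τ h2) := by rw [Λ.r_comp]; exact h1
  rw [comp'_eq h1, comp'_eq h2, comp'_eq h3, comp'_eq h4, Λ.assoc μ ν τ h1 h2 h3 h4]

theorem id_comp' {lam : Λ.Path} : Λ.comp' (Λ.r lam) lam = lam := by
  have h : Λ.s (Λ.r lam) = Λ.r lam := Λ.s_vertex _ (Λ.d_r lam)
  rw [comp'_eq h, Λ.id_comp]

theorem comp'_id {lam : Λ.Path} : Λ.comp' lam (Λ.s lam) = lam := by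
  have h : Λ.s lam = Λ.r (Λ.s lam) := (Λ.r_vertex _ (Λ.d_s lam)).symm
  rw [comp'_eq h, Λ.comp_id]

/-- Uniqueness of factorisation in terms of `comp'`. -/
theorem eq_of_comp'_eq {μ₁ ν₁ μ₂ ν₂ : Λ.Path} (hc1 : Λ.s μ₁ = Λ.r ν₁)
    (hc2 : Λ.s μ₂ = Λ.r ν₂) (hd : Λ.d μ₁ = Λ.d μ₂)
    (h : Λ.comp' μ₁ ν₁ = Λ.comp' μ₂ ν₂) : μ₁ = μ₂ ∧ ν₁ = ν₂ := by
  have hdν : Λ.d ν₁ = Λ.d ν₂ := by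
    have h' := congrArg Λ.d h
    rw [d_comp' hc1, d_comp' hc2, hd] at h'
    funext i
    have := congrFun h' i
    simp only [Pi.add_apply] at this
    omega
  have hfac := Λ.factor (Λ.comp' μ₁ ν₁) (Λ.d μ₁) (Λ.d ν₁) (d_comp' hc1)
  have e1 : (μ₁, ν₁) = (μ₂, ν₂) := by
    refine hfac.unique ⟨hc1, rfl, rfl, (comp'_eq hc1).symm⟩
      ⟨hc2, hd.symm, hdν.symm, ?_⟩
    rw [← comp'_eq hc2, ← h]
  exact ⟨congrArg Prod.fst e1, congrArg Prod.snd e1⟩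

theorem exists_split {τ : Λ.Path} {m n : Fin k → ℕ} (h : Λ.d τ = m + n) :
    ∃ μ ν : Λ.Path, Λ.d μ = m ∧ Λ.d ν = n ∧ Λ.s μ = Λ.r ν ∧ Λ.comp' μ ν = τ := by
  obtain ⟨⟨μ, ν⟩, ⟨hc, h1, h2, h3⟩, -⟩ := Λ.factor τ m n h
  exact ⟨μ, ν, h1, h2, hc, by rw [comp'_eq hc, h3]⟩

variable (Λ)

/-- `IsSeg τ p q ρ` : `ρ` is the segment `τ(p,q)`. -/
def IsSeg (τ : Λ.Path) (p q : Fin k → ℕ) (ρ : Λ.Path) : Prop :=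
  ∃ μ ν : Λ.Path, Λ.d μ = p ∧ Λ.d ρ = q - p ∧ Λ.s μ = Λ.r ρ ∧ Λ.s ρ = Λ.r ν ∧
    Λ.comp' μ (Λ.comp' ρ ν) = τ

variable {Λ}

theorem IsSeg.unique {τ : Λ.Path} {p q : Fin k → ℕ} {ρ₁ ρ₂ : Λ.Path}
    (h1 : Λ.IsSeg τ p q ρ₁) (h2 : Λ.IsSeg τ p q ρ₂) : ρ₁ = ρ₂ := by
  obtain ⟨μ₁, ν₁, hdμ₁, hdρ₁, hc₁, hc₁', he₁⟩ := h1
  obtain ⟨μ₂, ν₂, hdμ₂, hdρ₂, hc₂, hc₂', he₂⟩ := h2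
  have k1 : Λ.s μ₁ = Λ.r (Λ.comp' ρ₁ ν₁) := by rw [r_comp' hc₁']; exact hc₁
  have k2 : Λ.s μ₂ = Λ.r (Λ.comp' ρ₂ ν₂) := by rw [r_comp' hc₂']; exact hc₂
  have e0 := (eq_of_comp'_eq k1 k2 (hdμ₁.trans hdμ₂.symm) (he₁.trans he₂.symm)).2
  exact (eq_of_comp'_eq hc₁' hc₂' (hdρ₁.trans hdρ₂.symm) e0).1

/-- The segment `τ(p,q)` of a path, defined when `p ≤ q ≤ d τ` (junk otherwise). -/
noncomputable def seg (Λ : KGraph k) (τ : Λ.Path) (p q : Fin k → ℕ) : Λ.Path :=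
  open Classical in
  if h : ∃ ρ, Λ.IsSeg τ p q ρ then h.choose else τ

theorem isSeg_seg {τ : Λ.Path} {p q : Fin k → ℕ} (hpq : p ≤ q) (hq : q ≤ Λ.d τ) :
    Λ.IsSeg τ p q (Λ.seg τ p q) := by
  have hex : ∃ ρ, Λ.IsSeg τ p q ρ := by
    have hd1 : Λ.d τ = p + (Λ.d τ - p) := by
      funext i; have h1 : p i ≤ q i := hpq i; have h2 : q i ≤ Λ.d τ i := hq i
      simp only [Pi.add_apply, Pi.sub_apply]; omega
    obtain ⟨μ, Y, hdμ, hdY, hcμ, heμ⟩ := exists_split hd1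
    have hd2 : Λ.d Y = (q - p) + (Λ.d τ - q) := by
      rw [hdY]; funext i; have h1 : p i ≤ q i := hpq i; have h2 : q i ≤ Λ.d τ i := hq i
      simp only [Pi.add_apply, Pi.sub_apply]; omega
    obtain ⟨ρ, ν, hdρ, hdν, hcρ, heρ⟩ := exists_split hd2
    refine ⟨ρ, μ, ν, hdμ, hdρ, ?_, hcρ, by rw [heρ, heμ]⟩
    rw [← r_comp' hcρ, heρ]; exact hcμ
  unfold seg
  rw [dif_pos hex]
  exact hex.choose_spec

theorem IsSeg.seg_eq {τ : Λ.Path} {p q : Fin k → ℕ} {ρ : Λ.Path}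
    (h : Λ.IsSeg τ p q ρ) : Λ.seg τ p q = ρ := by
  have hex : ∃ ρ, Λ.IsSeg τ p q ρ := ⟨ρ, h⟩
  unfold seg
  rw [dif_pos hex]
  exact hex.choose_spec.unique h

theorem d_seg {τ : Λ.Path} {p q : Fin k → ℕ} (hpq : p ≤ q) (hq : q ≤ Λ.d τ) :
    Λ.d (Λ.seg τ p q) = q - p := by
  obtain ⟨μ, ν, -, h, -⟩ := isSeg_seg hpq hq
  exact h

end KGraph
namespace KGraph

variable {k : ℕ} {Λ : KGraph k}

theorem seg_comp'_left {μ ν : Λ.Path} {p : Fin k → ℕ} (hc : Λ.s μ = Λ.r ν)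
    (hp : Λ.d μ = p) : Λ.seg (Λ.comp' μ ν) 0 p = μ := by
  refine IsSeg.seg_eq ⟨Λ.r μ, ν, Λ.d_r μ, by rw [hp]; funext i; simp, ?_, hc, ?_⟩
  · rw [Λ.s_vertex _ (Λ.d_r μ)]
  · rw [show Λ.r μ = Λ.r (Λ.comp' μ ν) from (r_comp' hc).symm, id_comp']

theorem seg_comp'_right {μ ν : Λ.Path} {p q : Fin k → ℕ} (hc : Λ.s μ = Λ.r ν)
    (hp : Λ.d μ = p) (hq : Λ.d ν = q - p) : Λ.seg (Λ.comp' μ ν) p q = ν := by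
  refine IsSeg.seg_eq ⟨μ, Λ.s ν, hp, hq, hc, (Λ.r_vertex _ (Λ.d_s ν)).symm, ?_⟩
  rw [comp'_id]

theorem seg_seg {τ : Λ.Path} {p q st tt : Fin k → ℕ} (hst : st ≤ tt)
    (ht : tt ≤ q - p) (hpq : p ≤ q) (hq : q ≤ Λ.d τ)
    {u v : Fin k → ℕ} (hu : u = p + st) (hv : v = p + tt) :
    Λ.seg (Λ.seg τ p q) st tt = Λ.seg τ u v := by
  obtain ⟨M, N, hdM, hdσ, hcM, hcN, heM⟩ := isSeg_seg hpq hq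
  have hle : tt ≤ Λ.d (Λ.seg τ p q) := by
    rw [d_seg hpq hq]; exact ht
  obtain ⟨A, B, hdA, hdX, hcA, hcB, heA⟩ := isSeg_seg hst hle
  set σ := Λ.seg τ p q with hσ
  set X := Λ.seg σ st tt with hX
  have c1 : Λ.s X = Λ.r B := hcB
  have c2 : Λ.s B = Λ.r N := by
    rw [← hcN, ← heA, s_comp' (by rw [r_comp' hcB]; exact hcA), s_comp' hcB]
  have c3 : Λ.s A = Λ.r X := hcA
  have c4 : Λ.s M = Λ.r A := by
    rw [hcM, ← heA, r_comp' (by rw [r_comp' hcB]; exact hcA)]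
  have c5 : Λ.s X = Λ.r (Λ.comp' B N) := by rw [r_comp' c2]; exact c1
  have c6 : Λ.s A = Λ.r (Λ.comp' X (Λ.comp' B N)) := by rw [r_comp' c5]; exact c3
  symm
  refine IsSeg.seg_eq ⟨Λ.comp' M A, Λ.comp' B N, ?_, ?_, ?_, ?_, ?_⟩
  · rw [d_comp' c4, hdM, hdA, hu]
  · rw [hdX, hu, hv]; funext i; simp only [Pi.sub_apply, Pi.add_apply]; omega
  · rw [s_comp' c4]; exact c3
  · rw [c1, r_comp' c2]
  · calc Λ.comp' (Λ.comp' M A) (Λ.comp' X (Λ.comp' B N))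
        = Λ.comp' M (Λ.comp' A (Λ.comp' X (Λ.comp' B N))) := comp'_assoc c4 c6
      _ = Λ.comp' M (Λ.comp' (Λ.comp' A X) (Λ.comp' B N)) := by
            rw [comp'_assoc c3 c5]
      _ = Λ.comp' M (Λ.comp' (Λ.comp' (Λ.comp' A X) B) N) := by
            have c7 : Λ.s (Λ.comp' A X) = Λ.r B := by rw [s_comp' c3]; exact c1
            rw [comp'_assoc c7 c2]
      _ = Λ.comp' M (Λ.comp' (Λ.comp' A (Λ.comp' X B)) N) := by
            rw [comp'_assoc c3 c1]
      _ = τ := by rw [heA, heM]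

end KGraph
namespace KGraph

variable {k : ℕ} {Λ : KGraph k}

theorem InfinitePath.ext' {x y : InfinitePath Λ}
    (h : ∀ p q (hpq : p ≤ q), x.toFun p q hpq = y.toFun p q hpq) : x = y := by
  cases x with
  | mk f fd fs fr fc =>
    cases y with
    | mk f' fd' fs' fr' fc' =>
      have : f = f' := by funext p q hpq; exact h p q hpq
      subst this
      rfl

theorem shift_toFun (x : InfinitePath Λ) (n p q : Fin k → ℕ) (h : p ≤ q) :
    (x.shift n).toFun p q h = x.toFun (n + p) (n + q) (add_le_add le_rfl h) := rfl

theorem inf_seg (x : InfinitePath Λ) {p q L : Fin k → ℕ} (hpq : p ≤ q) (hL : q ≤ L)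
    (h0 : (0 : Fin k → ℕ) ≤ L) :
    Λ.seg (x.toFun 0 L h0) p q = x.toFun p q hpq := by
  have h0p : (0 : Fin k → ℕ) ≤ p := zero_le
  refine IsSeg.seg_eq ⟨x.toFun 0 p h0p, x.toFun q L hL, ?_, x.d_eq _ _ _, ?_, ?_, ?_⟩
  · rw [x.d_eq]; funext i; simp
  · rw [x.src, x.rng]
  · rw [x.src, x.rng]
  · have hc1 : Λ.s (x.toFun p q hpq) = Λ.r (x.toFun q L hL) := by rw [x.src, x.rng]
    rw [comp'_eq hc1, x.comp_eq p q L hpq hL hc1]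
    have hc2 : Λ.s (x.toFun 0 p h0p) = Λ.r (x.toFun p L (hpq.trans hL)) := by
      rw [x.src, x.rng]
    rw [comp'_eq hc2, x.comp_eq 0 p L h0p (hpq.trans hL) hc2]

theorem r_seg_zero {τ : Λ.Path} {q : Fin k → ℕ} (hq : q ≤ Λ.d τ) :
    Λ.r (Λ.seg τ 0 q) = Λ.r τ := by
  obtain ⟨μ, ν, hdμ, hdρ, hcμ, hcρ, he⟩ := isSeg_seg zero_le hq
  have hμv : Λ.r μ = μ := Λ.r_vertex _ hdμ
  have hμs : Λ.s μ = μ := Λ.s_vertex _ hdμ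
  have hthis : Λ.s μ = Λ.r (Λ.comp' (Λ.seg τ 0 q) ν) := by rw [r_comp' hcρ]; exact hcμ
  rw [← hcμ, hμs, ← hμv]
  conv_rhs => rw [← he]
  rw [r_comp' hthis]

theorem exists_deg_e (hsc : Λ.StronglyConnected) (v : Λ.Path) (hv : Λ.d v = 0)
    (i : Fin k) : ∃ f, Λ.d f = Pi.single i 1 ∧ Λ.r f = v := by
  obtain ⟨lam, hlam⟩ := Λ.edge_nonempty i
  obtain ⟨p, hpr, hps⟩ := hsc v (Λ.r lam) hv (Λ.d_r lam)
  have hd : Λ.d (Λ.comp' p lam) = Λ.d p + Pi.single i 1 := by rw [d_comp' hps, hlam]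
  have hle : Pi.single i 1 ≤ Λ.d (Λ.comp' p lam) := by
    rw [hd]; intro j; simp
  refine ⟨Λ.seg (Λ.comp' p lam) 0 (Pi.single i 1), ?_, ?_⟩
  · rw [d_seg zero_le hle]; funext j; simp
  · rw [r_seg_zero hle, r_comp' hps, hpr]

theorem exists_deg_r (hsc : Λ.StronglyConnected) :
    ∀ (N : ℕ) (b : Fin k → ℕ), (∑ i, b i) = N → ∀ v, Λ.d v = 0 →
      ∃ ζ, Λ.d ζ = b ∧ Λ.r ζ = v := by
  intro N
  induction N with
  | zero =>
    intro b hb v hv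
    have : b = 0 := by
      funext i
      have := Finset.sum_eq_zero_iff.mp hb i (Finset.mem_univ i)
      simpa using this
    exact ⟨v, by rw [hv, this], Λ.r_vertex v hv⟩
  | succ N ih =>
    intro b hb v hv
    have hex : ∃ i, b i ≠ 0 := by
      by_contra hc
      push_neg at hc
      rw [Finset.sum_eq_zero (fun i _ => hc i)] at hb
      omega
    obtain ⟨i, hi⟩ := hex
    obtain ⟨f, hdf, hrf⟩ := exists_deg_e hsc v hv i
    set b' : Fin k → ℕ := Function.update b i (b i - 1) with hb'
    have hsum : (∑ j, b' j) = N := by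
      rw [hb', Finset.sum_update_of_mem (Finset.mem_univ i),
        Finset.sdiff_singleton_eq_erase]
      rw [← Finset.add_sum_erase _ b (Finset.mem_univ i)] at hb
      omega
    obtain ⟨ζ', hdζ', hrζ'⟩ := ih b' hsum (Λ.s f) (Λ.d_s f)
    have hc : Λ.s f = Λ.r ζ' := hrζ'.symm
    refine ⟨Λ.comp' f ζ', ?_, by rw [r_comp' hc, hrf]⟩
    rw [d_comp' hc, hdf, hdζ', hb']
    funext j
    rcases eq_or_ne j i with rfl | hji
    · simp; omega
    · simp [Function.update_of_ne hji, Pi.single_eq_of_ne hji]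

end KGraph
namespace KGraph

variable {k : ℕ} {Λ : KGraph k}

/-- `lam` admits no common extension pattern at positions `m` and `n`. -/
def Good (Λ : KGraph k) (m n : Fin k → ℕ) (lam : Λ.Path) : Prop :=
  ∀ τ, Λ.d τ = m + n + Λ.d lam → Λ.seg τ m (m + Λ.d lam) = lam →
    Λ.seg τ n (n + Λ.d lam) = lam → False

theorem Good.prefix {m n : Fin k → ℕ} {lam ρ : Λ.Path} (hg : Λ.Good m n lam)
    (hc : Λ.s ρ = Λ.r lam) : Λ.Good m n (Λ.comp' ρ lam) := by
  have hD : Λ.d (Λ.comp' ρ lam) = Λ.d ρ + Λ.d lam := d_comp' hc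
  intro τ hτ Hm Hn
  rw [hD] at hτ Hm Hn
  have hbτ : Λ.d ρ ≤ Λ.d τ := by
    intro i; rw [hτ]; simp only [Pi.add_apply]; omega
  have hdτ₂ : Λ.d (Λ.seg τ (Λ.d ρ) (Λ.d τ)) = m + n + Λ.d lam := by
    rw [d_seg hbτ le_rfl, hτ]; funext i
    simp only [Pi.add_apply, Pi.sub_apply]; omega
  have key : ∀ w : Fin k → ℕ, w ≤ m + n →
      Λ.seg τ w (w + (Λ.d ρ + Λ.d lam)) = Λ.comp' ρ lam →
      Λ.seg (Λ.seg τ (Λ.d ρ) (Λ.d τ)) w (w + Λ.d lam) = lam := by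
    intro w hw Hw
    have h1 : Λ.seg (Λ.seg τ (Λ.d ρ) (Λ.d τ)) w (w + Λ.d lam) =
        Λ.seg τ (Λ.d ρ + w) (Λ.d ρ + (w + Λ.d lam)) := by
      refine seg_seg le_self_add ?_ hbτ le_rfl rfl rfl
      intro i
      have h' := congrFun hτ i; have h'' := hw i
      simp only [Pi.add_apply] at h' h''
      simp only [Pi.add_apply, Pi.sub_apply, h']; omega
    have h2 : Λ.seg (Λ.seg τ w (w + (Λ.d ρ + Λ.d lam))) (Λ.d ρ) (Λ.d ρ + Λ.d lam) =
        Λ.seg τ (Λ.d ρ + w) (Λ.d ρ + (w + Λ.d lam)) := by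
      refine seg_seg le_self_add ?_ le_self_add ?_ ?_ ?_
      · intro i; simp only [Pi.add_apply, Pi.sub_apply]; omega
      · intro i; rw [hτ]
        have h'' := hw i; simp only [Pi.add_apply] at h'' ⊢; omega
      · rw [add_comm (Λ.d ρ) w]
      · funext i; simp only [Pi.add_apply]; omega
    have h3 : Λ.seg (Λ.comp' ρ lam) (Λ.d ρ) (Λ.d ρ + Λ.d lam) = lam := by
      refine seg_comp'_right hc rfl ?_
      funext i; simp only [Pi.add_apply, Pi.sub_apply]; omega
    rw [h1, ← h2, Hw, h3]
  exact hg _ hdτ₂ (key m (by intro i; simp only [Pi.add_apply]; omega) Hm)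
    (key n (by intro i; simp only [Pi.add_apply]; omega) Hn)

theorem Good.suffix {m n : Fin k → ℕ} {lam ζ : Λ.Path} (hg : Λ.Good m n lam)
    (hc : Λ.s lam = Λ.r ζ) : Λ.Good m n (Λ.comp' lam ζ) := by
  have hD : Λ.d (Λ.comp' lam ζ) = Λ.d lam + Λ.d ζ := d_comp' hc
  intro τ hτ Hm Hn
  rw [hD] at hτ Hm Hn
  have hqτ : m + n + Λ.d lam ≤ Λ.d τ := by
    intro i; rw [hτ]; simp only [Pi.add_apply]; omega
  have hdτ₂ : Λ.d (Λ.seg τ 0 (m + n + Λ.d lam)) = m + n + Λ.d lam := by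
    rw [d_seg zero_le hqτ]; funext i
    simp only [Pi.add_apply, Pi.sub_apply, Pi.zero_apply]; omega
  have key : ∀ w : Fin k → ℕ, w ≤ m + n →
      Λ.seg τ w (w + (Λ.d lam + Λ.d ζ)) = Λ.comp' lam ζ →
      Λ.seg (Λ.seg τ 0 (m + n + Λ.d lam)) w (w + Λ.d lam) = lam := by
    intro w hw Hw
    have h1 : Λ.seg (Λ.seg τ 0 (m + n + Λ.d lam)) w (w + Λ.d lam) =
        Λ.seg τ w (w + Λ.d lam) := by
      refine seg_seg le_self_add ?_ zero_le hqτ (zero_add w).symm (zero_add _).symm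
      intro i
      have h'' := hw i
      simp only [Pi.add_apply] at h''
      simp only [Pi.add_apply, Pi.sub_apply, Pi.zero_apply]; omega
    have h2 : Λ.seg (Λ.seg τ w (w + (Λ.d lam + Λ.d ζ))) 0 (Λ.d lam) =
        Λ.seg τ w (w + Λ.d lam) := by
      refine seg_seg zero_le ?_ le_self_add ?_ ?_ ?_
      · intro i; simp only [Pi.add_apply, Pi.sub_apply, Pi.zero_apply]; omega
      · intro i; rw [hτ]
        have h'' := hw i; simp only [Pi.add_apply] at h'' ⊢; omega
      · exact (add_zero w).symm
      · rfl
    have h3 : Λ.seg (Λ.comp' lam ζ) 0 (Λ.d lam) = lam := seg_comp'_left hc rfl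
    rw [h1, ← h2, Hw, h3]
  exact hg _ hdτ₂ (key m (by intro i; simp only [Pi.add_apply]; omega) Hm)
    (key n (by intro i; simp only [Pi.add_apply]; omega) Hn)

theorem good_base (x : InfinitePath Λ) (m n N : Fin k → ℕ)
    (hx : x.toFun m (m + N) le_self_add ≠ x.toFun n (n + N) le_self_add) :
    Λ.Good m n (x.toFun 0 (m + n + N) zero_le) := by
  set L := m + n + N with hL
  set χ := x.toFun 0 L zero_le with hχ
  have hdχ : Λ.d χ = L := by rw [hχ, x.d_eq]; funext i; simp
  intro τ hτ Hm Hn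
  rw [hdχ] at hτ Hm Hn
  apply hx
  have hmL : m + L ≤ Λ.d τ := by intro i; rw [hτ]; simp only [Pi.add_apply]; omega
  have hnL : n + L ≤ Λ.d τ := by intro i; rw [hτ]; simp only [Pi.add_apply]; omega
  have e1 : Λ.seg (Λ.seg τ m (m + L)) n (n + N) = Λ.seg τ (m + n) (m + n + N) := by
    refine seg_seg le_self_add ?_ le_self_add hmL ?_ ?_
    · intro i; simp only [Pi.add_apply, Pi.sub_apply, hL]; omega
    · rfl
    · funext i; simp only [Pi.add_apply]; omega
  have e2 : Λ.seg (Λ.seg τ n (n + L)) m (m + N) = Λ.seg τ (m + n) (m + n + N) := by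
    refine seg_seg le_self_add ?_ le_self_add hnL ?_ ?_
    · intro i; simp only [Pi.add_apply, Pi.sub_apply, hL]; omega
    · rw [add_comm m n]
    · funext i; simp only [Pi.add_apply]; omega
  have f1 : Λ.seg χ n (n + N) = x.toFun n (n + N) le_self_add := by
    rw [hχ]
    exact inf_seg x le_self_add (by intro i; simp only [Pi.add_apply, hL]; omega) _
  have f2 : Λ.seg χ m (m + N) = x.toFun m (m + N) le_self_add := by
    rw [hχ]
    exact inf_seg x le_self_add (by intro i; simp only [Pi.add_apply, hL]; omega) _
  calc x.toFun m (m + N) le_self_add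
      = Λ.seg χ m (m + N) := f2.symm
    _ = Λ.seg (Λ.seg τ n (n + L)) m (m + N) := by rw [Hn]
    _ = Λ.seg τ (m + n) (m + n + N) := e2
    _ = Λ.seg (Λ.seg τ m (m + L)) n (n + N) := e1.symm
    _ = Λ.seg χ n (n + N) := by rw [Hm]
    _ = x.toFun n (n + N) le_self_add := f1

theorem exists_bad_window (x : InfinitePath Λ) (m n : Fin k → ℕ)
    (hne : x.shift m ≠ x.shift n) :
    ∃ N, x.toFun m (m + N) le_self_add ≠ x.toFun n (n + N) le_self_add := by
  by_contra hcon
  push_neg at hcon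
  apply hne
  apply InfinitePath.ext'
  intro p q hpq
  rw [shift_toFun, shift_toFun]
  have hc1 : Λ.s (x.toFun m (m + p) le_self_add) = Λ.r (x.toFun (m + p) (m + q)
      (add_le_add le_rfl hpq)) := by rw [x.src, x.rng]
  have hc2 : Λ.s (x.toFun n (n + p) le_self_add) = Λ.r (x.toFun (n + p) (n + q)
      (add_le_add le_rfl hpq)) := by rw [x.src, x.rng]
  have hdd : Λ.d (x.toFun m (m + p) le_self_add) = Λ.d (x.toFun n (n + p) le_self_add) := by
    rw [x.d_eq, x.d_eq]; funext i; simp only [Pi.add_apply, Pi.sub_apply]; omega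
  have hcomp : Λ.comp' (x.toFun m (m + p) le_self_add)
      (x.toFun (m + p) (m + q) (add_le_add le_rfl hpq)) =
      Λ.comp' (x.toFun n (n + p) le_self_add)
      (x.toFun (n + p) (n + q) (add_le_add le_rfl hpq)) := by
    rw [comp'_eq hc1, comp'_eq hc2, x.comp_eq, x.comp_eq]
    exact hcon q
  exact (eq_of_comp'_eq hc1 hc2 hdd hcomp).2

end KGraph
open KGraph InfinitePath

/-- For `g ∈ ℤ^k \ Per Λ` there exist `a ∈ ℕ^k \ {0}` and paths `λ_v ∈ vΛ^a` for each
vertex `v` such that `Λ^min(μλ_{s(μ)}, νλ_{s(μ)}) = ∅` whenever `s(μ) = s(ν)` and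
`d(μ) − d(ν) = g`. -/
theorem separating_tails {k : ℕ} (Λ : KGraph k)
    (hfin : Λ.IsFinite) (hsc : Λ.StronglyConnected)
    (g : Fin k → ℤ) (hg : g ∉ Λ.Per) :
    ∃ a : Fin k → ℕ, a ≠ 0 ∧
      ∃ lam : Λ.Vertex → Λ.Path,
        (∀ v : Λ.Vertex, Λ.d (lam v) = a ∧ Λ.r (lam v) = v.1) ∧
        ∀ μ ν : Λ.Path, Λ.s μ = Λ.s ν →
          (∀ i, (Λ.d μ i : ℤ) - Λ.d ν i = g i) →
          ∀ (h1 : Λ.s μ = Λ.r (lam ⟨Λ.s μ, Λ.d_s μ⟩))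
            (h2 : Λ.s ν = Λ.r (lam ⟨Λ.s μ, Λ.d_s μ⟩)),
            Λ.minSet (Λ.comp μ (lam ⟨Λ.s μ, Λ.d_s μ⟩) h1)
              (Λ.comp ν (lam ⟨Λ.s μ, Λ.d_s μ⟩) h2) = ∅ := by
  classical
  -- some coordinate of g is nonzero
  have hg0 : ∃ i, g i ≠ 0 := by
    by_contra h
    push_neg at h
    exact hg ⟨0, 0, fun i => by simp [h i], fun x => rfl⟩
  obtain ⟨i₀, hi₀⟩ := hg0
  set m : Fin k → ℕ := fun i => (g i).toNat with hm
  set n : Fin k → ℕ := fun i => (-g i).toNat with hn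
  have hmi : ∀ i, m i = (g i).toNat := fun i => rfl
  have hni : ∀ i, n i = (-g i).toNat := fun i => rfl
  have hmn : ∀ i, (m i : ℤ) - n i = g i := by
    intro i; rw [hmi, hni]; omega
  -- a witness to non-periodicity
  have hxex : ∃ x : InfinitePath Λ, x.shift m ≠ x.shift n := by
    by_contra h
    push_neg at h
    exact hg ⟨m, n, hmn, h⟩
  obtain ⟨x, hxne⟩ := hxex
  obtain ⟨N, hN⟩ := exists_bad_window x m n hxne
  set L : Fin k → ℕ := m + n + N with hL
  set χ := x.toFun 0 L zero_le with hχ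
  have hgoodχ : Λ.Good m n χ := good_base x m n N hN
  have hdχ : Λ.d χ = L := by rw [hχ, x.d_eq]; funext i; simp
  set w := x.toFun 0 0 le_rfl with hw
  have hrχ : Λ.r χ = w := x.rng _ _ _
  have hwvert : Λ.d w = 0 := by rw [hw, x.d_eq]; funext i; simp
  -- connectors from each vertex to w
  set ρ : Λ.Path → Λ.Path :=
    fun v => if h : Λ.d v = 0 then (hsc v w h hwvert).choose else v with hρdef
  have hρ : ∀ v, ∀ h : Λ.d v = 0, Λ.r (ρ v) = v ∧ Λ.s (ρ v) = w := by
    intro v h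
    rw [hρdef]; simp only [dif_pos h]
    exact (hsc v w h hwvert).choose_spec
  set V := (hfin 0).toFinset with hV
  set B : Fin k → ℕ := fun i => V.sup (fun u => Λ.d (ρ u) i) with hB
  have hBle : ∀ v, Λ.d v = 0 → ∀ i, Λ.d (ρ v) i ≤ B i := by
    intro v h i
    rw [hB]
    exact Finset.le_sup (f := fun u => Λ.d (ρ u) i)
      ((Set.Finite.mem_toFinset _).2 h)
  set a : Fin k → ℕ := B + L with ha
  have hane : a ≠ 0 := by
    intro h
    have h' := congrFun h i₀
    rw [ha] at h'
    simp only [Pi.add_apply, Pi.zero_apply, hL] at h'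
    have g2 := hmi i₀; have g3 := hni i₀
    omega
  -- the tails ζ
  have hζex : ∀ v : Λ.Vertex, ∃ ζ, Λ.d ζ = B - Λ.d (ρ v.1) ∧ Λ.r ζ = Λ.s χ :=
    fun v => exists_deg_r hsc _ _ rfl (Λ.s χ) (Λ.d_s χ)
  choose ζ hζd hζr using hζex
  -- the separating paths
  have hcχζ : ∀ v : Λ.Vertex, Λ.s χ = Λ.r (ζ v) := fun v => (hζr v).symm
  set lam : Λ.Vertex → Λ.Path :=
    fun v => Λ.comp' (ρ v.1) (Λ.comp' χ (ζ v)) with hlamdef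
  have hcρv : ∀ v : Λ.Vertex, Λ.s (ρ v.1) = Λ.r (Λ.comp' χ (ζ v)) := by
    intro v
    rw [r_comp' (hcχζ v), hrχ]
    exact (hρ v.1 v.2).2
  have hdlam : ∀ v : Λ.Vertex, Λ.d (lam v) = a := by
    intro v
    rw [hlamdef]
    simp only
    rw [d_comp' (hcρv v), d_comp' (hcχζ v), hζd, hdχ, ha]
    funext i
    have := hBle v.1 v.2 i
    simp only [Pi.add_apply, Pi.sub_apply]
    omega
  have hrlam : ∀ v : Λ.Vertex, Λ.r (lam v) = v.1 := by
    intro v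
    rw [hlamdef]
    simp only
    rw [r_comp' (hcρv v)]
    exact (hρ v.1 v.2).1
  have hglam : ∀ v : Λ.Vertex, Λ.Good m n (lam v) := by
    intro v
    rw [hlamdef]
    exact (hgoodχ.suffix (hcχζ v)).prefix (hcρv v)
  clear_value m n L χ w ρ V B a lam
  refine ⟨a, hane, lam, fun v => ⟨hdlam v, hrlam v⟩, ?_⟩
  intro μ ν hsμν hdg h1 h2
  set l0 := lam ⟨Λ.s μ, Λ.d_s μ⟩ with hl0
  have hdl0 : Λ.d l0 = a := hdlam _
  have h2' : Λ.s ν = Λ.r l0 := h2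

  rw [Set.eq_empty_iff_forall_notMem]
  rintro ⟨α, β⟩ ⟨hc1, hc2, heq, hdeg⟩
  simp only at hc1 hc2 heq hdeg
  have E1 : Λ.comp μ l0 h1 = Λ.comp' μ l0 := (comp'_eq h1).symm
  have E2 : Λ.comp ν l0 h2 = Λ.comp' ν l0 := (comp'_eq h2).symm
  have hc1' : Λ.s (Λ.comp' μ l0) = Λ.r α := by rw [← E1]; exact hc1
  have hc2' : Λ.s (Λ.comp' ν l0) = Λ.r β := by rw [← E2]; exact hc2
  have heq' : Λ.comp' (Λ.comp' μ l0) α = Λ.comp' (Λ.comp' ν l0) β := by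
    have t1 : Λ.comp' (Λ.comp' μ l0) α = Λ.comp (Λ.comp μ l0 h1) α hc1 := by
      rw [← E1]; exact comp'_eq hc1
    have t2 : Λ.comp' (Λ.comp' ν l0) β = Λ.comp (Λ.comp ν l0 h2) β hc2 := by
      rw [← E2]; exact comp'_eq hc2
    rw [t1, t2, heq]
  have hdeg' : Λ.d (Λ.comp' μ l0) + Λ.d α = Λ.d (Λ.comp' μ l0) ⊔ Λ.d (Λ.comp' ν l0) := by
    rw [← E1, ← E2]; exact hdeg
  -- degrees of α and β
  have hda : Λ.d α = n := by
    rw [d_comp' h1, d_comp' h2', hdl0] at hdeg'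
    funext i
    have hi := congrFun hdeg' i
    simp only [Pi.add_apply, Pi.sup_apply] at hi
    have g1 := hdg i; have g2 := hmi i; have g3 := hni i
    omega
  have hdb : Λ.d β = m := by
    have hd := congrArg Λ.d heq'
    rw [d_comp' hc1', d_comp' hc2', d_comp' h1, d_comp' h2', hdl0, hda] at hd
    funext i
    have hi := congrFun hd i
    simp only [Pi.add_apply] at hi
    have g1 := hdg i; have g2 := hmi i; have g3 := hni i
    omega
  set τ := Λ.comp' (Λ.comp' μ l0) α with hτdef
  have hτν : Λ.comp' (Λ.comp' ν l0) β = τ := heq'.symm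
  have hdτ : ∀ i, Λ.d τ i = Λ.d μ i + a i + n i := by
    intro i
    rw [hτdef, d_comp' hc1', d_comp' h1, hdl0, hda]
    simp only [Pi.add_apply]
  clear_value τ
  have key : ∀ (μ' γ : Λ.Path), Λ.s μ' = Λ.r l0 →
      Λ.s (Λ.comp' μ' l0) = Λ.r γ → Λ.comp' (Λ.comp' μ' l0) γ = τ →
      Λ.seg τ (Λ.d μ') (Λ.d μ' + a) = l0 := by
    intro μ' γ hμ' hγ hτeq
    have hcγ : Λ.s l0 = Λ.r γ := by rw [← s_comp' hμ']; exact hγ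
    have hre : Λ.comp' μ' (Λ.comp' l0 γ) = τ := by
      rw [← comp'_assoc hμ' hcγ]; exact hτeq
    have hμ'c : Λ.s μ' = Λ.r (Λ.comp' l0 γ) := by rw [r_comp' hcγ]; exact hμ'
    have hdτγ : Λ.d τ = Λ.d μ' + (a + Λ.d γ) := by
      rw [← hre, d_comp' hμ'c, d_comp' hcγ, hdl0]
    have stepA : Λ.seg τ (Λ.d μ') (Λ.d μ' + (a + Λ.d γ)) = Λ.comp' l0 γ := by
      rw [← hre]
      refine seg_comp'_right hμ'c rfl ?_
      rw [d_comp' hcγ, hdl0]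
      funext i; simp only [Pi.add_apply, Pi.sub_apply]; omega
    have stepB : Λ.seg (Λ.comp' l0 γ) 0 a = l0 := seg_comp'_left hcγ hdl0
    have stepC : Λ.seg (Λ.seg τ (Λ.d μ') (Λ.d μ' + (a + Λ.d γ))) 0 a =
        Λ.seg τ (Λ.d μ') (Λ.d μ' + a) := by
      refine seg_seg zero_le ?_ le_self_add (le_of_eq hdτγ.symm)
        (add_zero _).symm rfl
      refine Pi.le_def.mpr fun i => ?_
      simp only [Pi.add_apply, Pi.sub_apply]; omega
    rw [← stepC, stepA, stepB]
  have keyM : Λ.seg τ (Λ.d μ) (Λ.d μ + a) = l0 := key μ α h1 hc1' hτdef.symm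
  have keyN : Λ.seg τ (Λ.d ν) (Λ.d ν + a) = l0 := key ν β h2' hc2' hτν
  -- restrict to the minimal positions
  obtain ⟨c, hkey⟩ : ∃ c : Fin k → ℕ,
      ∀ i, c i + m i = Λ.d μ i ∧ c i + n i = Λ.d ν i := by
    refine ⟨fun i => if Λ.d μ i ≤ Λ.d ν i then Λ.d μ i else Λ.d ν i, fun i => ?_⟩
    have g1 := hdg i; have g2 := hmi i; have g3 := hni i
    by_cases h : Λ.d μ i ≤ Λ.d ν i
    · simp only [if_pos h]
      constructor <;> omega
    · simp only [if_neg h]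
      constructor <;> omega
  have hcτ : c ≤ Λ.d τ := by
    refine Pi.le_def.mpr fun i => ?_
    have g4 := (hkey i).1
    rw [hdτ i]
    omega
  have hdτ' : Λ.d (Λ.seg τ c (Λ.d τ)) = m + n + a := by
    rw [d_seg hcτ le_rfl]
    funext i
    simp only [Pi.add_apply, Pi.sub_apply]
    rw [hdτ i]
    have g4 := (hkey i).1; have g5 := (hkey i).2
    omega
  have claimM : Λ.seg (Λ.seg τ c (Λ.d τ)) m (m + a) = l0 := by
    have e : Λ.seg (Λ.seg τ c (Λ.d τ)) m (m + a) = Λ.seg τ (Λ.d μ) (Λ.d μ + a) := by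
      refine seg_seg le_self_add ?_ hcτ le_rfl ?_ ?_
      · refine Pi.le_def.mpr fun i => ?_
        simp only [Pi.add_apply, Pi.sub_apply]
        rw [hdτ i]
        have g4 := (hkey i).1
        omega
      · funext i
        simp only [Pi.add_apply]
        have g4 := (hkey i).1
        omega
      · funext i
        simp only [Pi.add_apply]
        have g4 := (hkey i).1
        omega
    rw [e, keyM]
  have claimN : Λ.seg (Λ.seg τ c (Λ.d τ)) n (n + a) = l0 := by
    have e : Λ.seg (Λ.seg τ c (Λ.d τ)) n (n + a) = Λ.seg τ (Λ.d ν) (Λ.d ν + a) := by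
      refine seg_seg le_self_add ?_ hcτ le_rfl ?_ ?_
      · refine Pi.le_def.mpr fun i => ?_
        simp only [Pi.add_apply, Pi.sub_apply]
        rw [hdτ i]
        have g4 := (hkey i).1; have g5 := (hkey i).2
        omega
      · funext i
        simp only [Pi.add_apply]
        have g5 := (hkey i).2
        omega
      · funext i
        simp only [Pi.add_apply]
        have g5 := (hkey i).2
        omega
    rw [e, keyN]
  exact hglam ⟨Λ.s μ, Λ.d_s μ⟩ (Λ.seg τ c (Λ.d τ))
    (by rw [← hl0, hdl0]; exact hdτ')
    (by rw [← hl0, hdl0]; exact claimM)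
    (by rw [← hl0, hdl0]; exact claimN)
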